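/- In the discrete-time model of pure-translation planar sliding, the state of the object at the end of the time step is unique: if (v, P_t, P_o, P_n, P_r, σ) and (v', P_t', P_o', P_n', P_r', σ') are two solutions of the governing equations (as in the context) with P_n ≥ 0, P_n' ≥ 0 and σ ≠ 0, σ' ≠ 0, then v = v', P_t = P_t', P_o = P_o', P_n = P_n', and P_r = P_r' = 0. -/

import Mathlib

open RealInnerProductSpace

/-- If all inner products against an orthonormal triple in 3-space agree, the vectors agree. -/
lemma eq_of_inner_frame {t o n : EuclideanSpace ℝ (Fin 3)}
    (hframe : Orthonormal ℝ ![t, o, n]) {v v' : EuclideanSpace ℝ (Fin 3)}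
    (h1 : ⟪t, v⟫ = ⟪t, v'⟫) (h2 : ⟪o, v⟫ = ⟪o, v'⟫) (h3 : ⟪n, v⟫ = ⟪n, v'⟫) : v = v' := by
  have hcard : Fintype.card (Fin 3) = Module.finrank ℝ (EuclideanSpace ℝ (Fin 3)) := by
    simp [finrank_euclideanSpace]
  let b := basisOfOrthonormalOfCardEqFinrank hframe hcard
  have hb : Orthonormal ℝ (⇑b) := by
    rw [show ⇑b = ![t, o, n] from coe_basisOfOrthonormalOfCardEqFinrank hframe hcard]
    exact hframe
  let ob := b.toOrthonormalBasis hb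
  have hob : ⇑ob = ![t, o, n] := by
    rw [Module.Basis.coe_toOrthonormalBasis]
    exact coe_basisOfOrthonormalOfCardEqFinrank hframe hcard
  apply ob.repr.injective
  ext i
  rw [ob.repr_apply_apply, ob.repr_apply_apply, hob]
  fin_cases i <;> simpa using (by assumption : _)

/-- Uniqueness for pure-translation planar sliding: any two solutions of the governing
discrete-time equations with nonnegative normal impulse and nonzero slip speed have the
same end-of-step velocity and the same aggregate contact impulses, and the aggregate
frictional moment-impulse vanishes. -/
theorem pure_translation_unique_state
    (m e μ : ℝ) (hm : 0 < m) (he : 0 < e) (hμ : 0 < μ)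
    (t o n J v0 : EuclideanSpace ℝ (Fin 3))
    (hframe : Orthonormal ℝ ![t, o, n])
    (hv0n : ⟪n, v0⟫ = 0)
    (v v' : EuclideanSpace ℝ (Fin 3))
    (Pn Pt Po Pr σ Pn' Pt' Po' Pr' σ' : ℝ)
    -- first solution
    (hvn : ⟪n, v⟫ = 0)
    (hN1 : m * ⟪t, v⟫ = Pt + ⟪t, J⟫ + m * ⟪t, v0⟫)
    (hN2 : m * ⟪o, v⟫ = Po + ⟪o, J⟫ + m * ⟪o, v0⟫)
    (hN3 : m * ⟪n, v⟫ = Pn + ⟪n, J⟫ + m * ⟪n, v0⟫)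
    (hσ : σ = e * Real.sqrt (⟪t, v⟫ ^ 2 + ⟪o, v⟫ ^ 2))
    (hF1 : 0 = e ^ 2 * μ * ⟪t, v⟫ * Pn + σ * Pt)
    (hF2 : 0 = e ^ 2 * μ * ⟪o, v⟫ * Pn + σ * Po)
    (hF3 : 0 = σ * Pr)
    (hPn : 0 ≤ Pn) (hσne : σ ≠ 0)
    -- second solution
    (hvn' : ⟪n, v'⟫ = 0)
    (hN1' : m * ⟪t, v'⟫ = Pt' + ⟪t, J⟫ + m * ⟪t, v0⟫)
    (hN2' : m * ⟪o, v'⟫ = Po' + ⟪o, J⟫ + m * ⟪o, v0⟫)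
    (hN3' : m * ⟪n, v'⟫ = Pn' + ⟪n, J⟫ + m * ⟪n, v0⟫)
    (hσ' : σ' = e * Real.sqrt (⟪t, v'⟫ ^ 2 + ⟪o, v'⟫ ^ 2))
    (hF1' : 0 = e ^ 2 * μ * ⟪t, v'⟫ * Pn' + σ' * Pt')
    (hF2' : 0 = e ^ 2 * μ * ⟪o, v'⟫ * Pn' + σ' * Po')
    (hF3' : 0 = σ' * Pr')
    (hPn' : 0 ≤ Pn') (hσne' : σ' ≠ 0) :
    v = v' ∧ Pt = Pt' ∧ Po = Po' ∧ Pn = Pn' ∧ Pr = Pr' ∧ Pr = 0 := by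
  set vt := ⟪t, v⟫; set vo := ⟪o, v⟫
  set vt' := ⟪t, v'⟫; set vo' := ⟪o, v'⟫
  set c := ⟪t, J⟫ + m * ⟪t, v0⟫ with hc
  set d := ⟪o, J⟫ + m * ⟪o, v0⟫ with hd
  -- normal impulses agree
  have hPneq : Pn = Pn' := by
    rw [hvn, hv0n] at hN3; rw [hvn', hv0n] at hN3'; linarith
  -- moment impulses vanish
  have hPr : Pr = 0 := by
    rcases mul_eq_zero.1 hF3.symm with h | h
    · exact absurd h hσne
    · exact h
  have hPr' : Pr' = 0 := by
    rcases mul_eq_zero.1 hF3'.symm with h | h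
    · exact absurd h hσne'
    · exact h
  -- positivity of slip speeds
  have hσpos : 0 < σ :=
    lt_of_le_of_ne (hσ ▸ mul_nonneg he.le (Real.sqrt_nonneg _)) (Ne.symm hσne)
  have hσpos' : 0 < σ' :=
    lt_of_le_of_ne (hσ' ▸ mul_nonneg he.le (Real.sqrt_nonneg _)) (Ne.symm hσne')
  -- squared slip speed identities
  have hs : σ ^ 2 = e ^ 2 * (vt ^ 2 + vo ^ 2) := by
    rw [hσ, mul_pow, Real.sq_sqrt (by positivity)]
  have hs' : σ' ^ 2 = e ^ 2 * (vt' ^ 2 + vo' ^ 2) := by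
    rw [hσ', mul_pow, Real.sq_sqrt (by positivity)]
  set A := m * σ + e ^ 2 * μ * Pn with hA
  set A' := m * σ' + e ^ 2 * μ * Pn with hA'
  have hApos : 0 < A :=
    add_pos_of_pos_of_nonneg (mul_pos hm hσpos) (by positivity)
  have hApos' : 0 < A' :=
    add_pos_of_pos_of_nonneg (mul_pos hm hσpos') (by positivity)
  -- momentum balance combined with friction law
  have h1 : vt * A = c * σ := by
    rw [hA, hc]; linear_combination σ * hN1 - hF1
  have h2 : vo * A = d * σ := by
    rw [hA, hd]; linear_combination σ * hN2 - hF2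
  have h1' : vt' * A' = c * σ' := by
    rw [hA', hc, hPneq]; linear_combination σ' * hN1' - hF1'
  have h2' : vo' * A' = d * σ' := by
    rw [hA', hd, hPneq]; linear_combination σ' * hN2' - hF2'
  -- A² = e² (c² + d²), independent of the solution
  have hAsq : σ ^ 2 * A ^ 2 = σ ^ 2 * (e ^ 2 * (c ^ 2 + d ^ 2)) := by
    linear_combination A ^ 2 * hs + e ^ 2 * (vt * A + c * σ) * h1 +
      e ^ 2 * (vo * A + d * σ) * h2
  have hAsq' : σ' ^ 2 * A' ^ 2 = σ' ^ 2 * (e ^ 2 * (c ^ 2 + d ^ 2)) := by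
    linear_combination A' ^ 2 * hs' + e ^ 2 * (vt' * A' + c * σ') * h1' +
      e ^ 2 * (vo' * A' + d * σ') * h2'
  have hA2 : A ^ 2 = e ^ 2 * (c ^ 2 + d ^ 2) :=
    mul_left_cancel₀ (pow_ne_zero 2 hσne) hAsq
  have hA2' : A' ^ 2 = e ^ 2 * (c ^ 2 + d ^ 2) :=
    mul_left_cancel₀ (pow_ne_zero 2 hσne') hAsq'
  have hAA' : A = A' := by
    have hz : (A - A') * (A + A') = 0 := by linear_combination hA2 - hA2'
    rcases mul_eq_zero.1 hz with h | h
    · linarith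
    · linarith
  have hσσ' : σ = σ' := by
    have : m * σ = m * σ' := by rw [hA, hA'] at hAA'; linarith
    exact mul_left_cancel₀ hm.ne' this
  have hvt : vt = vt' := by
    have : vt * A = vt' * A := by rw [h1, hσσ', ← h1', ← hAA']
    exact mul_right_cancel₀ hApos.ne' this
  have hvo : vo = vo' := by
    have : vo * A = vo' * A := by rw [h2, hσσ', ← h2', ← hAA']
    exact mul_right_cancel₀ hApos.ne' this
  have hPt : Pt = Pt' := by rw [hvt] at hN1; linarith
  have hPo : Po = Po' := by rw [hvo] at hN2; linarith
  refine ⟨eq_of_inner_frame hframe hvt hvo (by rw [hvn, hvn']), hPt, hPo, hPneq, by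
    rw [hPr, hPr'], hPr⟩
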